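/- Every Busemann point h of a finite-dimensional real normed space (V, ‖·‖) is of the form h = h*_{E,p} for some extreme set E of the dual unit ball B° and some p ∈ V, and h is not equal to φ_z for any z ∈ V. -/

import Mathlib

open Filter Topology Set

noncomputable section

variable {V : Type*} [NormedAddCommGroup V] [NormedSpace ℝ V]

/-- `φ_z(x) = ‖z − x‖ − ‖z‖`. -/
def phi (z : V) : V → ℝ := fun x => ‖z - x‖ - ‖z‖

/-- A horofunction: a limit, uniformly on compact sets, of functions `φ_{z_n}`,
which is not itself of the form `φ_z`. -/
def IsHorofunction (h : V → ℝ) : Prop :=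
  (∃ z : ℕ → V, ∀ K : Set V, IsCompact K →
      TendstoUniformlyOn (fun n x => phi (z n) x) h atTop K) ∧
  ∀ z : V, h ≠ phi z

/-- An almost-geodesic: a map `γ` defined on an unbounded subset `T` of `[0,∞)`
containing `0` such that for every `ε > 0`,
`|‖γ(t) − γ(s)‖ + ‖γ(s) − γ(0)‖ − t| < ε` for all sufficiently large `s ≤ t` in `T`. -/
def IsAlmostGeodesic (T : Set ℝ) (γ : ℝ → V) : Prop :=
  T ⊆ Set.Ici (0 : ℝ) ∧ (0 : ℝ) ∈ T ∧ ¬ BddAbove T ∧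
  ∀ ε > (0 : ℝ), ∃ M : ℝ, ∀ s ∈ T, ∀ t ∈ T, M ≤ s → s ≤ t →
    |‖γ t - γ s‖ + ‖γ s - γ 0‖ - t| < ε

/-- A Busemann point: a horofunction which is the limit, uniformly on compact sets,
of `φ_{γ(t)}` along an almost-geodesic `γ`. -/
def IsBusemannPoint (h : V → ℝ) : Prop :=
  IsHorofunction h ∧
  ∃ (T : Set ℝ) (γ : ℝ → V), IsAlmostGeodesic T γ ∧
    ∀ K : Set V, IsCompact K → ∀ ε > (0 : ℝ), ∃ M : ℝ, ∀ t ∈ T, M ≤ t →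
      ∀ x ∈ K, |phi (γ t) x - h x| < ε

/-- The dual unit ball `B° = {y ∈ V* : ⟨y,x⟩ ≥ −1 for all x ∈ B}`. -/
def dualBall (V : Type*) [NormedAddCommGroup V] [NormedSpace ℝ V] :
    Set (V →L[ℝ] ℝ) := {y | ∀ x : V, ‖x‖ ≤ 1 → -1 ≤ y x}

/-- `E` is an extreme set of `C`: `E` is a convex subset of `C` such that whenever a
relative interior point of a segment in `C` lies in `E`, both endpoints lie in `E`. -/
def IsExtremeSet {W : Type*} [AddCommGroup W] [Module ℝ W] (C E : Set W) : Prop :=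
  Convex ℝ E ∧ IsExtreme ℝ C E

/-- The Legendre–Fenchel transform `h*_{E,p}` of the function `h_{E,p}` which equals
`⟨·,p⟩ − inf_{y∈E}⟨y,p⟩` on `E` and `+∞` elsewhere; explicitly
`h*_{E,p}(x) = sup_{q∈E} (⟨q,x⟩ − (⟨q,p⟩ − inf_{y∈E}⟨y,p⟩))`. -/
def hstar (E : Set (V →L[ℝ] ℝ)) (p : V) : V → ℝ :=
  fun x => sSup ((fun q : V →L[ℝ] ℝ =>
    q x - (q p - sInf ((fun y : V →L[ℝ] ℝ => y p) '' E))) '' E)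

lemma dual_lb {y : V →L[ℝ] ℝ} (hy : y ∈ dualBall V) (w : V) : -‖w‖ ≤ y w := by
  rcases eq_or_ne w 0 with rfl | hw
  · simp
  · have hpos : (0:ℝ) < ‖w‖ := norm_pos_iff.2 hw
    have hnorm : ‖(‖w‖⁻¹ • w)‖ ≤ 1 := by
      rw [norm_smul, norm_inv, norm_norm, inv_mul_cancel₀ hpos.ne']
    have h1 := hy _ hnorm
    rw [map_smul, smul_eq_mul] at h1
    have h2 : -1 * ‖w‖ ≤ (‖w‖⁻¹ * y w) * ‖w‖ := mul_le_mul_of_nonneg_right h1 hpos.le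
    rw [mul_comm (‖w‖⁻¹) (y w), mul_assoc, inv_mul_cancel₀ hpos.ne'] at h2
    linarith

lemma mem_dualBall_of_norm_le {y : V →L[ℝ] ℝ} (hy : ‖y‖ ≤ 1) : y ∈ dualBall V := by
  intro x hx
  have h1 : ‖y x‖ ≤ ‖y‖ * ‖x‖ := y.le_opNorm x
  have h2 : ‖y‖ * ‖x‖ ≤ 1 := by nlinarith [norm_nonneg y, norm_nonneg x]
  have := abs_le.1 (le_trans (by rw [Real.norm_eq_abs] at h1; exact h1) h2)
  linarith [this.1]

lemma tendsto_of_almost_mono {F : Filter ℝ} [F.NeBot] (hle : F ≤ atTop) {f : ℝ → ℝ}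
    (am : ∀ ε > (0:ℝ), ∀ᶠ p in F ×ˢ F, p.1 ≤ p.2 → f p.1 - ε ≤ f p.2)
    (bb : ∃ A, ∀ᶠ t in F, f t ≤ A) (lb : ∃ B, ∀ᶠ t in F, B ≤ f t) :
    ∃ L, Tendsto f F (𝓝 L) := by
  obtain ⟨A, hA⟩ := bb
  obtain ⟨B, hB⟩ := lb
  have hbdd : F.IsBoundedUnder (· ≤ ·) f := ⟨A, hA⟩
  have hbdd' : F.IsBoundedUnder (· ≥ ·) f := ⟨B, hB⟩
  have hco : F.IsCoboundedUnder (· ≤ ·) f := hbdd'.isCoboundedUnder_le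
  have hco' : F.IsCoboundedUnder (· ≥ ·) f := hbdd.isCoboundedUnder_ge
  have key : ∀ ε > (0:ℝ), limsup f F - 2*ε ≤ liminf f F := by
    intro ε hε
    have hc := (am ε hε).curry
    have hfreq : ∃ᶠ s in F, limsup f F - ε < f s :=
      frequently_lt_of_lt_limsup hco (by linarith)
    obtain ⟨s, hs1, hs2⟩ := (hfreq.and_eventually hc).exists
    have hev : ∀ᶠ t in F, limsup f F - 2*ε ≤ f t := by
      filter_upwards [hs2, hle (eventually_ge_atTop s)] with t h1 h2
      have := h1 h2
      linarith
    exact le_liminf_of_le hco' hev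
  have hlim : limsup f F ≤ liminf f F := by
    by_contra hlt
    push_neg at hlt
    have h := key ((limsup f F - liminf f F)/3) (by linarith)
    linarith
  have heq : liminf f F = limsup f F := le_antisymm (liminf_le_limsup hbdd hbdd') hlim
  exact ⟨limsup f F, tendsto_of_liminf_eq_limsup heq rfl hbdd hbdd'⟩

lemma exists_eval_point (V : Type*) [NormedAddCommGroup V] [NormedSpace ℝ V]
    [FiniteDimensional ℝ V] (Φ : (V →L[ℝ] ℝ) →ₗ[ℝ] ℝ) :
    ∃ p : V, ∀ w : V →L[ℝ] ℝ, Φ w = w p := by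
  let e : (V →ₗ[ℝ] ℝ) ≃ₗ[ℝ] (V →L[ℝ] ℝ) := LinearMap.toContinuousLinearMap
  let Φ' : Module.Dual ℝ (Module.Dual ℝ V) := Φ ∘ₗ e.toLinearMap
  refine ⟨(Module.evalEquiv ℝ V).symm Φ', fun w => ?_⟩
  have h2 := Module.apply_evalEquiv_symm_apply ℝ V (w : V →ₗ[ℝ] ℝ) Φ'
  have h3 : Φ' (w : V →ₗ[ℝ] ℝ) = Φ w := by
    have he : e (w : V →ₗ[ℝ] ℝ) = w := by ext v; simp [e]
    simp only [Φ', LinearMap.comp_apply, LinearEquiv.coe_toLinearMap]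
    rw [he]
  rw [← h3, ← h2]
  rfl

set_option maxHeartbeats 1000000

/-- Every Busemann point `h` of a finite-dimensional normed space is of the form
`h*_{E,p}` for some nonempty extreme set `E` of the dual unit ball and some `p ∈ V`,
and `h` is not equal to `φ_z` for any `z`. -/
theorem busemann_point_form (V : Type*) [NormedAddCommGroup V] [NormedSpace ℝ V]
    [FiniteDimensional ℝ V] (h : V → ℝ) (hb : IsBusemannPoint h) :
    (∃ (E : Set (V →L[ℝ] ℝ)) (p : V),
      IsExtremeSet (dualBall V) E ∧ E.Nonempty ∧ h = hstar E p) ∧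
    ∀ z : V, h ≠ phi z := by
  classical
  obtain ⟨⟨_, hnot⟩, T, γ, ⟨hTi, hT0, hTub, hag⟩, hconv⟩ := hb
  refine ⟨?_, hnot⟩
  set F : Filter ℝ := atTop ⊓ 𝓟 T with hF
  have hle : F ≤ atTop := inf_le_left
  have hTp : F ≤ 𝓟 T := inf_le_right
  haveI hne : F.NeBot := by
    rw [hF, Filter.inf_principal_neBot_iff]
    intro U hU
    rw [mem_atTop_sets] at hU
    obtain ⟨a, ha⟩ := hU
    obtain ⟨t, htT, hat⟩ := not_bddAbove_iff.1 hTub a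
    exact ⟨t, ha t hat.le, htT⟩
  haveI hcg : F.IsCountablyGenerated := by rw [hF]; infer_instance
  have hmemT : ∀ᶠ s in F, s ∈ T := hTp (mem_principal_self T)
  -- pointwise convergence
  have hx_lim : ∀ x : V, Tendsto (fun s => ‖γ s - x‖ - ‖γ s‖) F (𝓝 (h x)) := by
    intro x
    rw [Metric.tendsto_nhds]
    intro ε hε
    obtain ⟨M, hM⟩ := hconv {x} isCompact_singleton ε hε
    rw [hF, eventually_inf_principal]
    filter_upwards [eventually_ge_atTop M] with t ht htT
    have := hM t htT ht x rfl
    rw [Real.dist_eq]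
    exact this
  have h0 : h 0 = 0 := by
    have h1 := hx_lim 0
    have h2 : Tendsto (fun s : ℝ => ‖γ s - (0:V)‖ - ‖γ s‖) F (𝓝 0) := by
      have : (fun s : ℝ => ‖γ s - (0:V)‖ - ‖γ s‖) = fun _ => (0:ℝ) := by
        funext s; simp
      rw [this]; exact tendsto_const_nhds
    exact tendsto_nhds_unique h1 h2
  -- almost-geodesic consequences
  have hsnorm : ∀ ε > (0:ℝ), ∀ᶠ s in F, |‖γ s - γ 0‖ - s| < ε := by
    intro ε hε
    obtain ⟨M, hM⟩ := hag ε hε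
    rw [hF, eventually_inf_principal]
    filter_upwards [eventually_ge_atTop M] with s hs hsT
    have := hM s hsT s hsT hs le_rfl
    simpa using this
  have nd : ∀ ε > (0:ℝ), ∀ᶠ p in F ×ˢ F, p.1 ≤ p.2 → ‖γ p.2 - γ p.1‖ ≤ p.2 - p.1 + ε := by
    intro ε hε
    have hε2 : (0:ℝ) < ε/2 := by linarith
    obtain ⟨M, hM⟩ := hag (ε/2) hε2
    have e1 : ∀ᶠ s in F, s ∈ T ∧ M ≤ s ∧ |‖γ s - γ 0‖ - s| < ε/2 :=
      hmemT.and (((eventually_ge_atTop M).filter_mono hle).and (hsnorm (ε/2) hε2))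
    filter_upwards [e1.prod_mk e1] with p hp hle'
    obtain ⟨⟨h1T, h1M, h1n⟩, ⟨h2T, _, _⟩⟩ := hp
    have key := hM p.1 h1T p.2 h2T h1M hle'
    have k1 := (abs_lt.1 key).2
    have k2 := (abs_lt.1 h1n).1
    linarith
  have am_unif : ∀ ε > (0:ℝ), ∀ᶠ p in F ×ˢ F, p.1 ≤ p.2 →
      ∀ z : V →L[ℝ] ℝ, (∀ w, -‖w‖ ≤ z w) → z (γ p.1) + p.1 - ε ≤ z (γ p.2) + p.2 := by
    intro ε hε
    filter_upwards [nd ε hε] with p hp hle' z hz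
    have h1 := hz (γ p.2 - γ p.1)
    rw [map_sub] at h1
    have h2 := hp hle'
    linarith
  -- the drift constant c
  obtain ⟨c, hc⟩ : ∃ c, Tendsto (fun s => s - ‖γ s‖) F (𝓝 c) := by
    apply tendsto_of_almost_mono hle
    · intro ε hε
      filter_upwards [nd ε hε] with p hp hle'
      have h1 := hp hle'
      have h2 := norm_sub_norm_le (γ p.2) (γ p.1)
      linarith
    · refine ⟨1 + ‖γ 0‖, ?_⟩
      filter_upwards [hsnorm 1 one_pos] with s hs
      have h1 := (abs_lt.1 hs).1
      have h2 : ‖γ s - γ 0‖ ≤ ‖γ s‖ + ‖γ 0‖ := norm_sub_le _ _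
      linarith
    · refine ⟨-(1 + ‖γ 0‖), ?_⟩
      filter_upwards [hsnorm 1 one_pos] with s hs
      have h1 := (abs_lt.1 hs).2
      have h2 : ‖γ s‖ - ‖γ 0‖ ≤ ‖γ s - γ 0‖ := norm_sub_norm_le _ _
      linarith
  -- eventual lower bound on f_y
  have flb : ∀ z : V →L[ℝ] ℝ, (∀ w, -‖w‖ ≤ z w) → ∀ᶠ s in F, c - 1 ≤ z (γ s) + s := by
    intro z hz
    have hev : ∀ᶠ s in F, c - 1 < s - ‖γ s‖ := hc.eventually (eventually_gt_nhds (by linarith))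
    filter_upwards [hev] with s hs
    have := hz (γ s)
    linarith
  -- upper bound h x ≥ y x - L + c
  have hub : ∀ z : V →L[ℝ] ℝ, (∀ w, -‖w‖ ≤ z w) → ∀ L : ℝ,
      Tendsto (fun s => z (γ s) + s) F (𝓝 L) → ∀ x, z x - L + c ≤ h x := by
    intro z hz L hL x
    have hptwise : ∀ s, z x - (z (γ s) + s) + (s - ‖γ s‖) ≤ ‖γ s - x‖ - ‖γ s‖ := by
      intro s
      have h1 := hz (γ s - x)
      rw [map_sub] at h1
      linarith
    exact le_of_tendsto_of_tendsto' ((tendsto_const_nhds.sub hL).add hc) (hx_lim x) hptwise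
  -- key existence: for each x, a functional attaining the sup
  have exy : ∀ x : V, ∃ y ∈ dualBall V,
      Tendsto (fun s => y (γ s) + s) F (𝓝 (y x - h x + c)) := by
    intro x
    obtain ⟨t, ht⟩ := F.exists_seq_tendsto
    have httop : Tendsto t atTop atTop := ht.mono_right hle
    have hγnorm : ∀ᶠ k in atTop, ‖x‖ < ‖γ (t k)‖ := by
      have h1 : Tendsto (fun k => t k - ‖γ (t k)‖) atTop (𝓝 c) := hc.comp ht
      have h2 := h1.eventually (eventually_lt_nhds (lt_add_one c))
      filter_upwards [h2, httop.eventually_ge_atTop (‖x‖ + c + 2)] with k hk1 hk2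
      linarith
    have hyex : ∀ k, ∃ y : V →L[ℝ] ℝ, ‖y‖ ≤ 1 ∧
        (x - γ (t k) ≠ 0 → y (x - γ (t k)) = ‖x - γ (t k)‖) := by
      intro k
      by_cases hne0 : x - γ (t k) ≠ 0
      · obtain ⟨g, hg1, hg2⟩ := exists_dual_vector ℝ _ (norm_ne_zero_iff.2 hne0)
        exact ⟨g, le_of_eq hg1, fun _ => hg2⟩
      · exact ⟨0, by simp, fun hcon => absurd hcon hne0⟩
    choose yk hyk1 hyk2 using hyex
    have hmemball : ∀ k, yk k ∈ Metric.closedBall (0 : V →L[ℝ] ℝ) 1 := by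
      intro k
      simpa [Metric.mem_closedBall, dist_zero_right] using hyk1 k
    obtain ⟨y, hymem, φk, hφmono, hyconv⟩ :=
      (isCompact_closedBall (0 : V →L[ℝ] ℝ) 1).tendsto_subseq hmemball
    have hydB : y ∈ dualBall V := by
      apply mem_dualBall_of_norm_le
      simpa [Metric.mem_closedBall, dist_zero_right] using hymem
    have hy_lb : ∀ w, -‖w‖ ≤ y w := dual_lb hydB
    have ht' : Tendsto (fun k => t (φk k)) atTop F := ht.comp hφmono.tendsto_atTop
    have happly : ∀ v : V, Tendsto (fun k => yk (φk k) v) atTop (𝓝 (y v)) := by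
      intro v
      exact ((ContinuousLinearMap.apply ℝ ℝ v).continuous.tendsto y).comp hyconv
    -- limit of f_{y_k}(t_k)
    have hfk : Tendsto (fun k => yk (φk k) (γ (t (φk k))) + t (φk k))
        atTop (𝓝 (y x - h x + c)) := by
      have hA : Tendsto (fun k => yk (φk k) x - (‖γ (t (φk k)) - x‖ - ‖γ (t (φk k))‖)
          + (t (φk k) - ‖γ (t (φk k))‖)) atTop (𝓝 (y x - h x + c)) :=
        ((happly x).sub ((hx_lim x).comp ht')).add (hc.comp ht')
      apply hA.congr'
      filter_upwards [hφmono.tendsto_atTop.eventually hγnorm] with k hk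
      have hne0 : x - γ (t (φk k)) ≠ 0 := by
        intro hcon
        rw [sub_eq_zero] at hcon
        rw [← hcon] at hk
        exact lt_irrefl _ hk
      have heq := hyk2 (φk k) hne0
      rw [map_sub] at heq
      rw [norm_sub_rev (γ (t (φk k))) x] at *
      linarith
    -- eventual upper bound on f_y
    have fbb : ∀ ε > (0:ℝ), ∀ᶠ s in F, y (γ s) + s ≤ y x - h x + c + 2*ε := by
      intro ε hε
      have hcur := (am_unif ε hε).curry
      filter_upwards [hcur] with s hs
      have hk_ev : ∀ᶠ k in atTop, yk (φk k) (γ s) + s ≤ y x - h x + c + 2*ε := by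
        filter_upwards [ht'.eventually hs,
          ht'.eventually ((eventually_ge_atTop s).filter_mono hle),
          hfk.eventually (eventually_lt_nhds
            (by linarith : y x - h x + c < y x - h x + c + ε))] with k hk1 hk2 hk3
        have hlbk : ∀ w, -‖w‖ ≤ yk (φk k) w := dual_lb (mem_dualBall_of_norm_le (hyk1 _))
        have := hk1 hk2 (yk (φk k)) hlbk
        linarith
      exact le_of_tendsto ((happly (γ s)).add_const s) hk_ev
    -- f_y converges
    obtain ⟨L, hL⟩ : ∃ L, Tendsto (fun s => y (γ s) + s) F (𝓝 L) := by
      apply tendsto_of_almost_mono hle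
      · intro ε hε
        filter_upwards [am_unif ε hε] with p hp hle'
        exact hp hle' y hy_lb
      · refine ⟨y x - h x + c + 2, ?_⟩
        filter_upwards [fbb 1 one_pos] with s hs
        linarith
      · exact ⟨c - 1, flb y hy_lb⟩
    have hLle : L ≤ y x - h x + c := by
      apply le_of_forall_pos_le_add
      intro ε hε
      have := le_of_tendsto hL (fbb (ε/2) (by linarith))
      linarith
    have hLge : y x - h x + c ≤ L := by
      have := hub y hy_lb L hL x
      linarith
    have hLeq : L = y x - h x + c := le_antisymm hLle hLge
    exact ⟨y, hydB, hLeq ▸ hL⟩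
  -- the extreme set
  set E : Set (V →L[ℝ] ℝ) :=
    {y | y ∈ dualBall V ∧ ∃ L, Tendsto (fun s => y (γ s) + s) F (𝓝 L)} with hEdef
  have hEconv : Convex ℝ E := by
    rintro y1 ⟨hd1, L1, hL1⟩ y2 ⟨hd2, L2, hL2⟩ a b ha hb hab
    refine ⟨?_, a*L1 + b*L2, ?_⟩
    · intro v hv
      have k1 := mul_le_mul_of_nonneg_left (hd1 v hv) ha
      have k2 := mul_le_mul_of_nonneg_left (hd2 v hv) hb
      simp only [ContinuousLinearMap.add_apply, ContinuousLinearMap.coe_smul',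
        Pi.smul_apply, smul_eq_mul]
      nlinarith
    · have hcomb := (hL1.const_mul a).add (hL2.const_mul b)
      apply hcomb.congr
      intro s
      simp only [ContinuousLinearMap.add_apply, ContinuousLinearMap.coe_smul',
        Pi.smul_apply, smul_eq_mul]
      have : a * (y1 (γ s) + s) + b * (y2 (γ s) + s)
          = a * y1 (γ s) + b * y2 (γ s) + (a + b) * s := by ring
      rw [this, hab, one_mul]
  have hEext : IsExtreme ℝ (dualBall V) E := by
    refine ⟨fun y hy => hy.1, ?_⟩
    rintro y1 hy1 y2 hy2 y ⟨hyd, L, hL⟩ hyseg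
    rw [openSegment_eq_image'] at hyseg
    obtain ⟨θ, ⟨hθ0, hθ1⟩, habeq⟩ := hyseg
    -- y = y1 + θ • (y2 - y1), 0 < θ < 1
    have hmem : ∀ (z1 z2 : V →L[ℝ] ℝ), z1 ∈ dualBall V → z2 ∈ dualBall V →
        ∀ a b : ℝ, 0 < a → 0 < b → a + b = 1 → a • z1 + b • z2 = y → z1 ∈ E := by
      intro z1 z2 hz1 hz2 a b ha hb hab habeq
      refine ⟨hz1, ?_⟩
      apply tendsto_of_almost_mono hle
      · intro ε hε
        filter_upwards [am_unif ε hε] with p hp hle'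
        exact hp hle' z1 (dual_lb hz1)
      · refine ⟨(L + 1 - b*(c-1))/a, ?_⟩
        filter_upwards [hL.eventually (eventually_lt_nhds (lt_add_one L)),
          flb z2 (dual_lb hz2)] with s hs1 hs2
        rw [← habeq] at hs1
        simp only [ContinuousLinearMap.add_apply, ContinuousLinearMap.coe_smul',
          Pi.smul_apply, smul_eq_mul] at hs1
        rw [le_div_iff₀ ha]
        have hs' : a = 1 - b := by linarith
        have key : (z1 (γ s) + s) * a
            = (a * z1 (γ s) + b * z2 (γ s) + s) - b * (z2 (γ s) + s) := by
          rw [hs']; ring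
        have hmul := mul_le_mul_of_nonneg_left hs2 hb.le
        linarith
      · exact ⟨c - 1, flb z1 (dual_lb hz1)⟩
    have hy1E : y1 ∈ E := by
      apply hmem y1 y2 hy1 hy2 (1 - θ) θ (by linarith) hθ0 (by ring)
      rw [← habeq]
      module
    have hy2E : y2 ∈ E := by
      apply hmem y2 y1 hy2 hy1 θ (1 - θ) hθ0 (by linarith) (by ring)
      rw [← habeq]
      module
    exact hy1E
  -- the point p
  obtain ⟨p, hp⟩ : ∃ p : V, ∀ y1, y1 ∈ E → ∀ y2, y2 ∈ E → ∀ L1 L2 : ℝ,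
      Tendsto (fun s => y1 (γ s) + s) F (𝓝 L1) →
      Tendsto (fun s => y2 (γ s) + s) F (𝓝 L2) → L1 - L2 = y1 p - y2 p := by
    let S : Submodule ℝ (V →L[ℝ] ℝ) :=
      { carrier := {w | ∃ L, Tendsto (fun s => w (γ s)) F (𝓝 L)}
        add_mem' := by
          rintro a b ⟨La, ha⟩ ⟨Lb, hb⟩
          exact ⟨La + Lb, by simpa using ha.add hb⟩
        zero_mem' := ⟨0, by simpa using (tendsto_const_nhds :
          Tendsto (fun _ : ℝ => (0:ℝ)) F _)⟩
        smul_mem' := by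
          rintro r a ⟨La, ha⟩
          refine ⟨r * La, ?_⟩
          have := ha.const_mul r
          simpa using this }
    have hStendsto : ∀ w : S, Tendsto (fun s => (w : V →L[ℝ] ℝ) (γ s)) F
        (𝓝 (limUnder F (fun s => (w : V →L[ℝ] ℝ) (γ s)))) := by
      rintro ⟨w, Lw, hw⟩
      simpa [hw.limUnder_eq] using hw
    let Lf : S →ₗ[ℝ] ℝ :=
      { toFun := fun w => limUnder F (fun s => (w : V →L[ℝ] ℝ) (γ s))
        map_add' := by
          intro a b
          have ha := hStendsto a
          have hb := hStendsto b
          have hab : Tendsto (fun s => ((a + b : S) : V →L[ℝ] ℝ) (γ s)) F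
              (𝓝 (limUnder F (fun s => (a : V →L[ℝ] ℝ) (γ s))
                + limUnder F (fun s => (b : V →L[ℝ] ℝ) (γ s)))) := by
            simpa using ha.add hb
          exact hab.limUnder_eq
        map_smul' := by
          intro r a
          have ha := hStendsto a
          have hra : Tendsto (fun s => ((r • a : S) : V →L[ℝ] ℝ) (γ s)) F
              (𝓝 (r * limUnder F (fun s => (a : V →L[ℝ] ℝ) (γ s)))) := by
            simpa using ha.const_mul r
          simpa using hra.limUnder_eq }
    obtain ⟨Φ, hΦ⟩ := Lf.exists_extend
    obtain ⟨p, hpΦ⟩ := exists_eval_point V Φ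
    refine ⟨p, ?_⟩
    intro y1 h1 y2 h2 L1 L2 hL1 hL2
    have hsubt : Tendsto (fun s => (y1 - y2 : V →L[ℝ] ℝ) (γ s)) F (𝓝 (L1 - L2)) := by
      have h' := hL1.sub hL2
      have heqf : (fun s => (y1 (γ s) + s) - (y2 (γ s) + s))
          = fun s => (y1 - y2 : V →L[ℝ] ℝ) (γ s) := by
        funext s
        simp only [ContinuousLinearMap.sub_apply]
        ring
      rwa [heqf] at h'
    have hsub : (y1 - y2 : V →L[ℝ] ℝ) ∈ S := ⟨L1 - L2, hsubt⟩
    have hΦval : Φ (y1 - y2) = L1 - L2 := by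
      have h1' := LinearMap.congr_fun hΦ ⟨y1 - y2, hsub⟩
      have h2' : Lf ⟨y1 - y2, hsub⟩ = L1 - L2 := hsubt.limUnder_eq
      rw [← h2']
      exact h1'
    have := hpΦ (y1 - y2)
    rw [hΦval] at this
    simpa [ContinuousLinearMap.sub_apply] using this
  -- base point y0
  obtain ⟨y0, hy0d, hy0t⟩ := exy 0
  have hy0t' : Tendsto (fun s => y0 (γ s) + s) F (𝓝 c) := by
    have heq0 : y0 (0:V) - h 0 + c = c := by rw [h0, map_zero]; ring
    rwa [heq0] at hy0t
  have hy0E : y0 ∈ E := ⟨hy0d, c, hy0t'⟩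
  have hLval : ∀ y L, y ∈ dualBall V → Tendsto (fun s => y (γ s) + s) F (𝓝 L) →
      L = y p - y0 p + c := by
    intro y L hyd hL
    have := hp y ⟨hyd, L, hL⟩ y0 hy0E L c hL hy0t'
    linarith
  have hinf : IsLeast ((fun y : V →L[ℝ] ℝ => y p) '' E) (y0 p) := by
    constructor
    · exact ⟨y0, hy0E, rfl⟩
    · rintro v ⟨y, hyE, rfl⟩
      obtain ⟨hyd, L, hL⟩ := hyE
      have h1 := hub y (dual_lb hyd) L hL 0
      rw [map_zero, h0] at h1
      have h2 := hLval y L hyd hL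
      simp only []
      linarith
  have hinf_eq : sInf ((fun y : V →L[ℝ] ℝ => y p) '' E) = y0 p := hinf.csInf_eq
  refine ⟨E, p, ⟨hEconv, hEext⟩, ⟨y0, hy0E⟩, ?_⟩
  funext x
  have hgreat : IsGreatest ((fun q : V →L[ℝ] ℝ => q x - (q p - y0 p)) '' E) (h x) := by
    constructor
    · obtain ⟨y, hyd, hyt⟩ := exy x
      refine ⟨y, ⟨hyd, _, hyt⟩, ?_⟩
      have h2 := hLval y _ hyd hyt
      simp only []
      linarith
    · rintro v ⟨y, hyE, rfl⟩
      obtain ⟨hyd, L, hL⟩ := hyE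
      have h1 := hub y (dual_lb hyd) L hL x
      have h2 := hLval y L hyd hL
      simp only []
      linarith
  show h x = hstar E p x
  rw [hstar, hinf_eq]
  exact hgreat.csSup_eq.symm
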